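/- Let T be a junction tree of CDC(S) and let e be any edge of T. If e partitions the vertex set S into S1 and S2 (the two connected components of T - e), then {(⋃_{S ∈ S1} S) \ mid(e), (⋃_{S ∈ S2} S) \ mid(e)} is a biclique of the conflict graph of CDC(S): every element u of the first set and v of the second set satisfy that {u,v} is contained in no member of S. -/

import Mathlib

/-- A junction tree for a labeled collection of finite index sets. -/
def IsJunctionTree {ι α : Type*} [DecidableEq α] (G : SimpleGraph ι)
    (f : ι → Finset α) : Prop :=
  G.IsTree ∧ ∀ (i j : ι) (p : G.Walk i j), p.IsPath →
    (∀ x ∈ p.support, f i ∩ f j ⊆ f x) ∧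
    (∀ a b : ι, s(a, b) ∈ p.edges → f i ∩ f j ⊆ f a ∩ f b)

open SimpleGraph

private lemma reach_cover {ι : Type*} (T : SimpleGraph ι) (A B : ι) :
    ∀ {x y : ι} (_ : T.Walk x y),
      ((T.deleteEdges {s(A, B)}).Reachable A x ∨ (T.deleteEdges {s(A, B)}).Reachable B x) →
      ((T.deleteEdges {s(A, B)}).Reachable A y ∨ (T.deleteEdges {s(A, B)}).Reachable B y) := by
  intro x y w
  induction w with
  | nil => exact id
  | @cons x z _ h _ ih =>
    intro hx
    apply ih
    by_cases he : s(x, z) = s(A, B)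
    · rw [Sym2.eq_iff] at he
      rcases he with ⟨rfl, rfl⟩ | ⟨rfl, rfl⟩
      · exact Or.inr (Reachable.refl _)
      · exact Or.inl (Reachable.refl _)
    · have hadj : (T.deleteEdges {s(A, B)}).Adj x z :=
        SimpleGraph.deleteEdges_adj.mpr ⟨h, by simpa using he⟩
      rcases hx with h1 | h1
      · exact Or.inl (h1.trans hadj.reachable)
      · exact Or.inr (h1.trans hadj.reachable)

private lemma key {ι α : Type*} [DecidableEq ι] [DecidableEq α] {T : SimpleGraph ι} {f : ι → Finset α}
    (hT : IsJunctionTree T f) {A B X D : ι} (hAB : T.Adj A B)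
    (hX : (T.deleteEdges {s(A, B)}).Reachable A X)
    (hD : (T.deleteEdges {s(A, B)}).Reachable B D)
    {v : α} (hvX : v ∈ f X) (hvD : v ∈ f D) : v ∈ f A ∩ f B := by
  have hbr : ¬ (T.deleteEdges {s(A, B)}).Reachable A B :=
    (isAcyclic_iff_forall_adj_isBridge.mp hT.1.IsAcyclic hAB :)
  obtain ⟨w⟩ := hT.1.isConnected.preconnected X D
  by_cases he : s(A, B) ∈ w.bypass.edges
  · exact (hT.2 X D w.bypass w.bypass_isPath).2 A B he (Finset.mem_inter.mpr ⟨hvX, hvD⟩)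
  · exfalso
    have hsub : ∀ e ∈ w.bypass.edges, e ∈ (T.deleteEdges {s(A, B)}).edgeSet := by
      intro e hee
      rw [edgeSet_deleteEdges]
      exact ⟨w.bypass.edges_subset_edgeSet hee, by rintro rfl; exact he hee⟩
    have hXD : (T.deleteEdges {s(A, B)}).Reachable X D := ⟨w.bypass.transfer _ hsub⟩
    exact hbr ((hX.trans hXD).trans hD.symm)

theorem junctionTree_edge_gives_biclique {α : Type*} [DecidableEq α]
    (𝒮 : Finset (Finset α)) (T : SimpleGraph {S // S ∈ 𝒮})
    (hT : IsJunctionTree T (fun S => (S : Finset α)))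
    (A B : {S // S ∈ 𝒮}) (hAB : T.Adj A B) :
    ∀ u v : α,
      (∃ C : {S // S ∈ 𝒮}, (T.deleteEdges {s(A, B)}).Reachable A C ∧ u ∈ (C : Finset α)) →
      u ∉ (A : Finset α) ∩ (B : Finset α) →
      (∃ C : {S // S ∈ 𝒮}, (T.deleteEdges {s(A, B)}).Reachable B C ∧ v ∈ (C : Finset α)) →
      v ∉ (A : Finset α) ∩ (B : Finset α) →
      ∀ S ∈ 𝒮, ¬ (u ∈ S ∧ v ∈ S) := by
  rintro u v ⟨C, hC, hu⟩ hu2 ⟨D, hD, hv⟩ hv2 S hS ⟨huS, hvS⟩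
  set X : {S // S ∈ 𝒮} := ⟨S, hS⟩ with hXdef
  haveI : DecidableEq {S // S ∈ 𝒮} := Classical.decEq _
  obtain ⟨w⟩ := hT.1.isConnected.preconnected A X
  rcases reach_cover T A B w (Or.inl (Reachable.refl _)) with hXA | hXB
  · exact hv2 (key hT hAB hXA hD hvS hv)
  · have hswap : ({s(A, B)} : Set (Sym2 {S // S ∈ 𝒮})) = {s(B, A)} := by
      rw [Sym2.eq_swap]
    have hXB' : (T.deleteEdges {s(B, A)}).Reachable B X := by rwa [← hswap]
    have hC' : (T.deleteEdges {s(B, A)}).Reachable A C := by rwa [← hswap]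
    have := key hT hAB.symm hXB' hC' huS hu
    rw [Finset.inter_comm] at this
    exact hu2 this
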